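/- If H generates the portfolio π with respect to the passive numéraire with shares s, then for any f ∈ C²((0,∞), R), the function H_f(y) := f(Σ_{i=1}^n s_i e^{y_i}) + H(y) generates the same portfolio π at every point of E_s^n. -/

import Mathlib

/-- Auxiliary: derivative of the sum map. -/
lemma sum_exp_hasFDerivAt (n : ℕ) (s : Fin n → ℝ) (y : Fin n → ℝ) :
    HasFDerivAt (fun z : Fin n → ℝ => ∑ i, s i * Real.exp (z i))
      (∑ i, (s i * Real.exp (y i)) •
        (ContinuousLinearMap.proj i : (Fin n → ℝ) →L[ℝ] ℝ)) y := by
  apply HasFDerivAt.fun_sum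
  intro i _
  have hp : HasFDerivAt (fun z : Fin n → ℝ => z i)
      (ContinuousLinearMap.proj i : (Fin n → ℝ) →L[ℝ] ℝ) y :=
    (ContinuousLinearMap.proj i : (Fin n → ℝ) →L[ℝ] ℝ).hasFDerivAt
  have h1 : HasFDerivAt (fun z : Fin n → ℝ => Real.exp (z i))
      (Real.exp (y i) • (ContinuousLinearMap.proj i : (Fin n → ℝ) →L[ℝ] ℝ)) y :=
    by have := (Real.hasDerivAt_exp (y i)).comp_hasFDerivAt y hp; exact this
  have h2 := h1.const_mul (s i)
  rw [smul_smul] at h2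
  exact h2

/-- If `H` generates the portfolio `π` with respect to the passive
numéraire with shares `s`, then for any `f ∈ C²((0,∞), ℝ)` the function
`H_f(y) := f(Σᵢ sᵢ e^{yᵢ}) + H(y)` generates the same portfolio at every point of
`E_s^n = {y : Σᵢ sᵢ e^{yᵢ} = 1}`, where the portfolio generated by `G` at `y` is
`πᵢ = (1 − Σⱼ DⱼG(y)) ρᵢ(y) + DᵢG(y)` with `ρᵢ(y) = sᵢ e^{yᵢ}`. -/
theorem gauge_freedom_of_generating_functions
    (n : ℕ)
    (s : Fin n → ℝ) (hs : ∀ i, 0 ≤ s i) (hs0 : s ≠ 0)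
    (E : Set (Fin n → ℝ)) (hE : E = {y | ∑ i, s i * Real.exp (y i) = 1})
    (U : Set (Fin n → ℝ)) (hU : IsOpen U) (hUE : E ⊆ U)
    (H : (Fin n → ℝ) → ℝ) (hH : ContDiffOn ℝ 2 H U)
    (f : ℝ → ℝ) (hf : ContDiffOn ℝ 2 f (Set.Ioi 0))
    (Hf : (Fin n → ℝ) → ℝ)
    (hHf : ∀ y, Hf y = f (∑ i, s i * Real.exp (y i)) + H y) :
    ∀ y ∈ E, ∀ i : Fin n,
      (1 - ∑ j, fderiv ℝ Hf y (Pi.single j 1)) * (s i * Real.exp (y i))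
          + fderiv ℝ Hf y (Pi.single i 1)
        = (1 - ∑ j, fderiv ℝ H y (Pi.single j 1)) * (s i * Real.exp (y i))
          + fderiv ℝ H y (Pi.single i 1) := by
  intro y hy i
  have hyE : ∑ i, s i * Real.exp (y i) = 1 := by rw [hE] at hy; exact hy
  -- H differentiable at y
  have hHd : DifferentiableAt ℝ H y :=
    ((hH.differentiableOn (by norm_num)).differentiableAt (hU.mem_nhds (hUE hy)))
  -- f differentiable at 1
  have hfd : DifferentiableAt ℝ f 1 :=
    (hf.differentiableOn (by norm_num)).differentiableAt
      (isOpen_Ioi.mem_nhds (by norm_num : (1:ℝ) ∈ Set.Ioi 0))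
  set L : (Fin n → ℝ) →L[ℝ] ℝ :=
    ∑ i, (s i * Real.exp (y i)) • (ContinuousLinearMap.proj i : (Fin n → ℝ) →L[ℝ] ℝ)
  have hS : HasFDerivAt (fun z : Fin n → ℝ => ∑ i, s i * Real.exp (z i)) L y :=
    sum_exp_hasFDerivAt n s y
  set c : ℝ := deriv f 1
  have hcomp : HasFDerivAt (fun z : Fin n → ℝ => f (∑ i, s i * Real.exp (z i)))
      (c • L) y := by
    have hfd' : HasDerivAt f c (∑ i, s i * Real.exp (y i)) := by
      rw [hyE]; exact hfd.hasDerivAt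
    exact hfd'.comp_hasFDerivAt y hS
  have hHf' : HasFDerivAt Hf (c • L + fderiv ℝ H y) y := by
    have h := hcomp.add hHd.hasFDerivAt
    have : Hf = fun z => f (∑ i, s i * Real.exp (z i)) + H z := funext hHf
    rw [this]
    exact h
  have hfd1 : fderiv ℝ Hf y = c • L + fderiv ℝ H y := hHf'.fderiv
  have hL : ∀ j, L (Pi.single j 1) = s j * Real.exp (y j) := by
    intro j
    simp [L, ContinuousLinearMap.sum_apply, Pi.single_apply, Finset.sum_ite_eq',
      mul_comm]
  have happ : ∀ j, fderiv ℝ Hf y (Pi.single j 1)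
      = c * (s j * Real.exp (y j)) + fderiv ℝ H y (Pi.single j 1) := by
    intro j
    rw [hfd1]
    simp [hL j]
  have hsum : ∑ j, fderiv ℝ Hf y (Pi.single j 1)
      = c + ∑ j, fderiv ℝ H y (Pi.single j 1) := by
    simp only [happ, Finset.sum_add_distrib, ← Finset.mul_sum, hyE, mul_one]
  rw [hsum, happ i]
  ring
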